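/- The set C_L(A) = {B : A ≤_L B} of matrices Lyapunov dominating A is a convex invertible cone containing A. -/

import Mathlib

open Matrix
open scoped ComplexOrder

/-- The set `C_L(A)` of matrices Lyapunov dominating `A` is a convex invertible
cone containing `A`. -/
theorem stmt3 {n : ℕ} (A : Matrix (Fin n) (Fin n) ℂ) :
    let C : Set (Matrix (Fin n) (Fin n) ℂ) :=
      {B | ∀ H : Matrix (Fin n) (Fin n) ℂ, H.IsHermitian →
        (H * A + Aᴴ * H).PosSemidef → (H * B + Bᴴ * H).PosSemidef}
    A ∈ C ∧
    (∀ B₁ ∈ C, ∀ B₂ ∈ C, B₁ + B₂ ∈ C) ∧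
    (∀ B ∈ C, ∀ c : ℝ, 0 ≤ c → c • B ∈ C) ∧
    (∀ B ∈ C, IsUnit B → B⁻¹ ∈ C) := by
  intro C
  refine ⟨fun H _ h => h, ?_, ?_, ?_⟩
  · intro B₁ h₁ B₂ h₂ H hH hA
    have := (h₁ H hH hA).add (h₂ H hH hA)
    have e : H * (B₁ + B₂) + (B₁ + B₂)ᴴ * H
        = (H * B₁ + B₁ᴴ * H) + (H * B₂ + B₂ᴴ * H) := by
      simp [conjTranspose_add, mul_add, add_mul]; abel
    rw [e]; exact this
  · intro B hB c hc H hH hA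
    have e : H * (c • B) + (c • B)ᴴ * H = c • (H * B + Bᴴ * H) := by
      simp [smul_add, mul_smul_comm, smul_mul_assoc]
    rw [e]
    have hps := hB H hH hA
    refine ⟨?_, fun x => ?_⟩
    · rw [Matrix.IsHermitian, conjTranspose_smul, star_trivial, hps.1]
    · exact (hps.smul hc).2 x
  · intro B hB hU H hH hA
    have hps := hB H hH hA
    have hinv : B * B⁻¹ = 1 := mul_nonsing_inv B (isUnit_iff_isUnit_det B |>.mp hU)
    have hinv' : B⁻¹ * B = 1 := nonsing_inv_mul B (isUnit_iff_isUnit_det B |>.mp hU)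
    have := hps.conjTranspose_mul_mul_same B⁻¹
    have e : (B⁻¹)ᴴ * (H * B + Bᴴ * H) * B⁻¹ = H * B⁻¹ + (B⁻¹)ᴴ * H := by
      have : (B⁻¹)ᴴ * Bᴴ = 1 := by
        rw [← conjTranspose_mul, hinv, conjTranspose_one]
      calc (B⁻¹)ᴴ * (H * B + Bᴴ * H) * B⁻¹
          = (B⁻¹)ᴴ * H * (B * B⁻¹) + ((B⁻¹)ᴴ * Bᴴ) * (H * B⁻¹) := by noncomm_ring
        _ = H * B⁻¹ + (B⁻¹)ᴴ * H := by
            rw [hinv, this, mul_one, one_mul]; abel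
    rw [← e]; exact this
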